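/- Let r be a positive integer, c a nonzero integer, and b a polynomial with integer coefficients satisfying b(−1−n) = (−1)^r · b(n) for all integers n. Define the sequence (u_n) of rational numbers by u_0 = 1, u_1 = b(0), and (n+1)^r · u_{n+1} = b(n) · u_n − c · n^r · u_{n−1} for n ≥ 1. Then for every positive integer n, Σ_{k=0}^{n−1} b(k) · (−c)^{n−1−k} · u_k² = n^r · u_n · u_{n−1}. Consequently, if p is an odd prime with p ∤ c and u_m is p-integral for every positive integer m, then Σ_{k=0}^{p−1} (b(k)/(−c)^k) · u_k² ≡ 0 (mod p^r). -/

import Mathlib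

/-- A rational number is `p`-integral if `p` does not divide its denominator
(in lowest terms). -/
def pIntegral (p : ℕ) (a : ℚ) : Prop := ¬ (p : ℕ) ∣ a.den

lemma pIntegral_mul {p : ℕ} (hp : p.Prime) {a b : ℚ}
    (ha : pIntegral p a) (hb : pIntegral p b) : pIntegral p (a * b) := by
  intro h
  rcases (Nat.Prime.dvd_mul hp).1 (h.trans (Rat.mul_den_dvd a b)) with h1 | h1
  exacts [ha h1, hb h1]

lemma pIntegral_inv_int {p : ℕ} {d : ℤ} (hd : ¬ (p : ℤ) ∣ d) :
    pIntegral p (((d : ℚ))⁻¹) := by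
  intro h
  have h1 : ((d : ℚ))⁻¹ = Rat.divInt 1 d := by
    rw [Rat.divInt_eq_div, Int.cast_one, one_div]
  rw [h1] at h
  exact hd (dvd_trans (Int.natCast_dvd_natCast.2 h) (Rat.den_dvd 1 d))

theorem apery_like_sum_identity (r : ℕ) (hr : 0 < r) (c : ℤ) (hc : c ≠ 0)
    (b : Polynomial ℤ) (hb : ∀ n : ℤ, b.eval (-1 - n) = (-1) ^ r * b.eval n)
    (u : ℕ → ℚ) (hu0 : u 0 = 1) (hu1 : u 1 = ((b.eval 0 : ℤ) : ℚ))
    (hrec : ∀ n : ℕ, 1 ≤ n →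
      ((n : ℚ) + 1) ^ r * u (n + 1)
        = ((b.eval (n : ℤ) : ℤ) : ℚ) * u n - (c : ℚ) * (n : ℚ) ^ r * u (n - 1)) :
    (∀ n : ℕ, 0 < n →
      ∑ k ∈ Finset.range n, ((b.eval (k : ℤ) : ℤ) : ℚ) * (-(c : ℚ)) ^ (n - 1 - k) * u k ^ 2
        = (n : ℚ) ^ r * u n * u (n - 1)) ∧
    (∀ p : ℕ, p.Prime → p ≠ 2 → ¬ (p : ℤ) ∣ c → (∀ m : ℕ, 0 < m → pIntegral p (u m)) →
      ∃ t : ℚ, pIntegral p t ∧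
        ∑ k ∈ Finset.range p, ((b.eval (k : ℤ) : ℤ) : ℚ) / (-(c : ℚ)) ^ k * u k ^ 2
          = (p : ℚ) ^ r * t) := by
  have key : ∀ n : ℕ, 0 < n →
      ∑ k ∈ Finset.range n, ((b.eval (k : ℤ) : ℤ) : ℚ) * (-(c : ℚ)) ^ (n - 1 - k) * u k ^ 2
        = (n : ℚ) ^ r * u n * u (n - 1) := by
    intro n hn
    induction n with
    | zero => omega
    | succ m ih =>
      rcases Nat.eq_zero_or_pos m with h0 | hm
      · subst h0; simp [hu0, hu1]
      · have hS := ih hm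
        rw [Finset.sum_range_succ]
        have hterm : ∀ k ∈ Finset.range m,
            ((b.eval (k : ℤ) : ℤ) : ℚ) * (-(c : ℚ)) ^ (m + 1 - 1 - k) * u k ^ 2
              = (-(c : ℚ)) * (((b.eval (k : ℤ) : ℤ) : ℚ) * (-(c : ℚ)) ^ (m - 1 - k) * u k ^ 2) := by
          intro k hk
          have hk' : k < m := Finset.mem_range.mp hk
          have he : m + 1 - 1 - k = (m - 1 - k) + 1 := by omega
          rw [he, pow_succ]; ring
        rw [Finset.sum_congr rfl hterm, ← Finset.mul_sum, hS]
        have hrm := hrec m hm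
        have hm1 : m + 1 - 1 = m := by omega
        have hmm : m + 1 - 1 - m = 0 := by omega
        simp only [Nat.add_sub_cancel, Nat.sub_self, pow_zero]
        push_cast
        linear_combination (-(u m)) * hrm
  refine ⟨key, ?_⟩
  intro p hp hp2 hpc hu
  have hp3 : 3 ≤ p := by
    have := hp.two_le; omega
  have hp0 : 0 < p := hp.pos
  have hC0 : (-(c : ℚ)) ≠ 0 := neg_ne_zero.2 (Int.cast_ne_zero.2 hc)
  have hkey := key p hp0
  refine ⟨u p * u (p - 1) * ((-(c : ℚ)) ^ (p - 1))⁻¹, ?_, ?_⟩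
  · have hd : ¬ (p : ℤ) ∣ (-c) ^ (p - 1) := by
      intro hdvd
      have hpp : Prime (p : ℤ) := Nat.prime_iff_prime_int.mp hp
      exact hpc ((Int.dvd_neg).mp (hpp.dvd_of_dvd_pow hdvd))
    have h2 : ((((-c) ^ (p - 1) : ℤ)) : ℚ) = (-(c : ℚ)) ^ (p - 1) := by push_cast; ring
    have hinv : pIntegral p (((-(c : ℚ)) ^ (p - 1))⁻¹) := by
      rw [← h2]; exact pIntegral_inv_int hd
    exact pIntegral_mul hp (pIntegral_mul hp (hu p hp0) (hu (p - 1) (by omega))) hinv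
  · have hsum : ∑ k ∈ Finset.range p, ((b.eval (k : ℤ) : ℤ) : ℚ) / (-(c : ℚ)) ^ k * u k ^ 2
        = (∑ k ∈ Finset.range p,
            ((b.eval (k : ℤ) : ℤ) : ℚ) * (-(c : ℚ)) ^ (p - 1 - k) * u k ^ 2) / (-(c : ℚ)) ^ (p - 1) := by
      rw [Finset.sum_div]
      refine Finset.sum_congr rfl fun k hk => ?_
      have hk' : k < p := Finset.mem_range.mp hk
      have hpow : (-(c : ℚ)) ^ (p - 1 - k) * (-(c : ℚ)) ^ k = (-(c : ℚ)) ^ (p - 1) := by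
        rw [← pow_add]; congr 1; omega
      rw [div_mul_eq_mul_div, div_eq_div_iff (pow_ne_zero _ hC0) (pow_ne_zero _ hC0), ← hpow]
      ring
    rw [hsum, hkey]
    field_simp
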